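/- The automorphism group of the Kneser graph K(5,2) (the Petersen graph) has order 120, i.e. it is isomorphic to the symmetric group S_5 acting by permuting {1,2,3,4,5}. -/

import Mathlib

/-- The Kneser graph K(5,2) (the Petersen graph): vertices are 2-element subsets of
{1,...,5}, adjacent iff disjoint. -/
def petersen : SimpleGraph {s : Finset (Fin 5) // s.card = 2} where
  Adj a b := Disjoint a.1 b.1
  symm := ⟨fun a b h => h.symm⟩
  loopless := by
    constructor
    rintro ⟨s, hs⟩ h
    simp only [disjoint_self] at h
    simp [h] at hs

namespace PetersenAux

abbrev V : Type := {s : Finset (Fin 5) // s.card = 2}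

set_option maxHeartbeats 4000000 in
set_option synthInstance.maxHeartbeats 1000000 in
set_option synthInstance.maxSize 2000 in
lemma common_point : ∀ a b c d : V, a ≠ b → a ≠ c → a ≠ d → b ≠ c → b ≠ d → c ≠ d →
    ¬ Disjoint a.1 b.1 → ¬ Disjoint a.1 c.1 → ¬ Disjoint a.1 d.1 → ¬ Disjoint b.1 c.1 →
    ¬ Disjoint b.1 d.1 → ¬ Disjoint c.1 d.1 →
    ∃ j : Fin 5, j ∈ a.1 ∧ j ∈ b.1 ∧ j ∈ c.1 ∧ j ∈ d.1 := by decide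

/-- The vertices through a given point. -/
def star (i : Fin 5) : Finset V := Finset.univ.filter (fun a => i ∈ a.1)

lemma mem_star {i : Fin 5} {a : V} : a ∈ star i ↔ i ∈ a.1 := by
  simp [star]

lemma card_star : ∀ i : Fin 5, (star i).card = 4 := by decide

lemma card_star_union : ∀ i j : Fin 5, i ≠ j → (star i ∪ star j).card = 7 := by decide

set_option maxHeartbeats 2000000 in
set_option maxRecDepth 20000 in
lemma perm_of_fix : ∀ π : Equiv.Perm (Fin 5),
    (∀ s : Finset (Fin 5), s.card = 2 → s.image π = s) → π = 1 := by decide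

/-- The automorphism of the Petersen graph induced by a permutation. -/
def toAutFun (π : Equiv.Perm (Fin 5)) : petersen ≃g petersen where
  toFun a := ⟨a.1.image π, by rw [Finset.card_image_of_injective _ π.injective, a.2]⟩
  invFun a := ⟨a.1.image π.symm, by rw [Finset.card_image_of_injective _ π.symm.injective, a.2]⟩
  left_inv a := by
    ext1
    simp [Finset.image_image]
  right_inv a := by
    ext1
    simp [Finset.image_image]
  map_rel_iff' := by
    intro a b
    exact Finset.disjoint_image π.injective

/-- The group homomorphism from `S₅` to the automorphism group. -/
def F : Equiv.Perm (Fin 5) →* (petersen ≃g petersen) :=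
  MonoidHom.mk' toAutFun (by
    intro π ρ
    apply RelIso.ext
    intro a
    apply Subtype.ext
    show a.1.image (π * ρ) = (a.1.image ρ).image π
    rw [Finset.image_image]
    rfl)

lemma F_injective : Function.Injective F := by
  rw [injective_iff_map_eq_one]
  intro π h
  apply perm_of_fix
  intro s hs
  have := DFunLike.congr_fun h ⟨s, hs⟩
  exact Subtype.ext_iff.mp this

lemma card_eq_four {α : Type*} [DecidableEq α] {T : Finset α} (h : T.card = 4) :
    ∃ a b c d : α, a ≠ b ∧ a ≠ c ∧ a ≠ d ∧ b ≠ c ∧ b ≠ d ∧ c ≠ d ∧ T = {a, b, c, d} := by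
  obtain ⟨a, t, ha, rfl, ht⟩ := Finset.card_eq_succ.mp h
  obtain ⟨b, c, d, hbc, hbd, hcd, rfl⟩ := Finset.card_eq_three.mp ht
  refine ⟨a, b, c, d, ?_, ?_, ?_, hbc, hbd, hcd, rfl⟩ <;>
    · rintro rfl; simp at ha

section Surj

variable (φ : petersen ≃g petersen)

lemma not_disj_image {a b : V} (h : ¬ Disjoint a.1 b.1) :
    ¬ Disjoint (φ a).1 (φ b).1 := by
  intro hd
  exact h (φ.map_rel_iff.mp hd)

lemma exists_common (i : Fin 5) : ∃ j : Fin 5, ∀ a : V, i ∈ a.1 → j ∈ (φ a).1 := by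
  obtain ⟨a, b, c, d, hab, hac, had, hbc, hbd, hcd, hT⟩ := card_eq_four (card_star i)
  have hmem : ∀ x : V, x ∈ star i → i ∈ x.1 := fun x hx => mem_star.mp hx
  have ha : a ∈ star i := by rw [hT]; simp
  have hb : b ∈ star i := by rw [hT]; simp
  have hc : c ∈ star i := by rw [hT]; simp
  have hd : d ∈ star i := by rw [hT]; simp
  have nd : ∀ x ∈ star i, ∀ y ∈ star i, ¬ Disjoint (φ x).1 (φ y).1 := by
    intro x hx y hy
    apply not_disj_image
    exact Finset.not_disjoint_iff.mpr ⟨i, hmem x hx, hmem y hy⟩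
  obtain ⟨j, hj⟩ := common_point (φ a) (φ b) (φ c) (φ d)
    (fun h => hab (φ.injective (Subtype.ext (Subtype.ext_iff.mp h))))
    (fun h => hac (φ.injective (Subtype.ext (Subtype.ext_iff.mp h))))
    (fun h => had (φ.injective (Subtype.ext (Subtype.ext_iff.mp h))))
    (fun h => hbc (φ.injective (Subtype.ext (Subtype.ext_iff.mp h))))
    (fun h => hbd (φ.injective (Subtype.ext (Subtype.ext_iff.mp h))))
    (fun h => hcd (φ.injective (Subtype.ext (Subtype.ext_iff.mp h))))
    (nd a ha b hb) (nd a ha c hc) (nd a ha d hd) (nd b hb c hc) (nd b hb d hd) (nd c hc d hd)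
  refine ⟨j, fun x hx => ?_⟩
  have hx' : x ∈ star i := mem_star.mpr hx
  rw [hT] at hx'
  simp only [Finset.mem_insert, Finset.mem_singleton] at hx'
  rcases hx' with rfl | rfl | rfl | rfl
  · exact hj.1
  · exact hj.2.1
  · exact hj.2.2.1
  · exact hj.2.2.2

/-- The permutation of points induced by an automorphism. -/
noncomputable def sigma (i : Fin 5) : Fin 5 := (exists_common φ i).choose

lemma sigma_spec {i : Fin 5} {a : V} (h : i ∈ a.1) : sigma φ i ∈ (φ a).1 :=
  (exists_common φ i).choose_spec a h

lemma sigma_ne {i j : Fin 5} (h : i ≠ j) : sigma φ i ≠ sigma φ j := by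
  intro he
  have hsub : (star i ∪ star j).image φ ⊆ star (sigma φ i) := by
    intro x hx
    obtain ⟨b, hb, rfl⟩ := Finset.mem_image.mp hx
    rcases Finset.mem_union.mp hb with hb | hb
    · exact mem_star.mpr (sigma_spec φ (mem_star.mp hb))
    · rw [he]
      exact mem_star.mpr (sigma_spec φ (mem_star.mp hb))
  have h7 : ((star i ∪ star j).image φ).card = 7 := by
    rw [Finset.card_image_of_injective _ φ.injective, card_star_union i j h]
  have := Finset.card_le_card hsub
  rw [h7, card_star] at this
  omega

lemma sigma_injective : Function.Injective (sigma φ) := fun i j h => by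
  by_contra hne
  exact sigma_ne φ hne h

lemma phi_eq (a : V) : (φ a).1 = a.1.image (sigma φ) := by
  obtain ⟨i, j, hij, hs⟩ := Finset.card_eq_two.mp a.2
  have hi : sigma φ i ∈ (φ a).1 := sigma_spec φ (by rw [hs]; simp)
  have hj : sigma φ j ∈ (φ a).1 := sigma_spec φ (by rw [hs]; simp)
  have himg : a.1.image (sigma φ) = {sigma φ i, sigma φ j} := by
    rw [hs, Finset.image_insert, Finset.image_singleton]
  rw [himg]
  have hsub : ({sigma φ i, sigma φ j} : Finset (Fin 5)) ⊆ (φ a).1 := by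
    intro x hx
    simp only [Finset.mem_insert, Finset.mem_singleton] at hx
    rcases hx with rfl | rfl
    · exact hi
    · exact hj
  have hcard : (φ a).1.card ≤ ({sigma φ i, sigma φ j} : Finset (Fin 5)).card := by
    rw [(φ a).2, Finset.card_insert_of_notMem (by simpa using sigma_ne φ hij),
      Finset.card_singleton]
  exact (Finset.eq_of_subset_of_card_le hsub hcard).symm

lemma F_surjective : Function.Surjective F := by
  intro φ
  have hbij : Function.Bijective (sigma φ) :=
    Finite.injective_iff_bijective.mp (sigma_injective φ)
  refine ⟨Equiv.ofBijective _ hbij, ?_⟩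
  apply RelIso.ext
  intro a
  apply Subtype.ext
  show a.1.image (sigma φ) = (φ a).1
  exact (phi_eq φ a).symm

end Surj

/-- `S₅` is isomorphic to the automorphism group of the Petersen graph. -/
noncomputable def mulEquiv : Equiv.Perm (Fin 5) ≃* (petersen ≃g petersen) :=
  MulEquiv.ofBijective F ⟨F_injective, F_surjective⟩

end PetersenAux

/-- The automorphism group of the Petersen graph has order 120 and is isomorphic to
the symmetric group `S₅`. -/
theorem petersen_aut_group :
    Nat.card (petersen ≃g petersen) = 120 ∧
    Nonempty ((petersen ≃g petersen) ≃* Equiv.Perm (Fin 5)) := by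
  constructor
  · rw [← Nat.card_congr PetersenAux.mulEquiv.toEquiv, Nat.card_eq_fintype_card,
      Fintype.card_perm, Fintype.card_fin]
    rfl
  · exact ⟨PetersenAux.mulEquiv.symm⟩
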